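/- Let L be a {Φ∪Σ,Δ}-field, fix σ_u, σ_v, σ_k ∈ Σ, and let C ∈ GL_n(L) and D_u, D_v ∈ GL_n(L) satisfy σ_u(D_v)·D_u = σ_v(D_u)·D_v. Then for every matrix Z ∈ M_n(L): σ_u(σ_k(D_v)) · (σ_k(D_u)·Z·C·D_u^{-1}·σ_u(C)^{-1}) · σ_u(C·D_v^{-1}·σ_v(C)^{-1}) = σ_v(σ_k(D_u)) · (σ_k(D_v)·Z·C·D_v^{-1}·σ_v(C)^{-1}) · σ_v(C·D_u^{-1}·σ_u(C)^{-1}). (This is the integrability/compatibility of the system of equations σ_i(Z) = σ_k(D_i)·Z·C·D_i^{-1}·σ_i(C)^{-1}.) -/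

import Mathlib

/-- A `{Φ∪Σ,Δ}`-field structure on a field `L`: commuting automorphisms
`φ_1,…,φ_q` and `σ_1,…,σ_r` together with derivations `∂_1,…,∂_m`, all of
which pairwise commute. -/
structure PhiSigmaDeltaField (q r m : ℕ) (L : Type*) [Field L] where
  φ : Fin q → L ≃+* L
  σ : Fin r → L ≃+* L
  der : Fin m → L → L
  der_add : ∀ i x y, der i (x + y) = der i x + der i y
  der_mul : ∀ i x y, der i (x * y) = der i x * y + x * der i y
  comm_φφ : ∀ i j x, φ i (φ j x) = φ j (φ i x)
  comm_φσ : ∀ i j x, φ i (σ j x) = σ j (φ i x)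
  comm_σσ : ∀ i j x, σ i (σ j x) = σ j (σ i x)
  comm_φder : ∀ i j x, φ i (der j x) = der j (φ i x)
  comm_σder : ∀ i j x, σ i (der j x) = der j (σ i x)
  comm_derder : ∀ i j x, der i (der j x) = der j (der i x)

section Aux

variable {n : ℕ} {L : Type*} [Field L]

lemma auxMapMul (f : L ≃+* L) (A B : Matrix (Fin n) (Fin n) L) :
    (A * B).map ⇑f = A.map ⇑f * B.map ⇑f := by
  have := Matrix.map_mul (L := A) (M := B) (f := (f : L →+* L))
  simpa using this

lemma auxMapIsUnit (f : L ≃+* L) (A : Matrix (Fin n) (Fin n) L) (hA : IsUnit A) :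
    IsUnit (A.map ⇑f) := by
  have hd : IsUnit A.det := (Matrix.isUnit_iff_isUnit_det A).mp hA
  refine (Matrix.isUnit_iff_isUnit_det _).mpr ?_
  apply IsUnit.of_mul_eq_one (A⁻¹.map ⇑f).det
  rw [← Matrix.det_mul, ← auxMapMul, Matrix.mul_nonsing_inv _ hd]
  simp

lemma auxMapInv (f : L ≃+* L) (A : Matrix (Fin n) (Fin n) L) (hA : IsUnit A) :
    (A⁻¹).map ⇑f = (A.map ⇑f)⁻¹ := by
  have hd : IsUnit A.det := (Matrix.isUnit_iff_isUnit_det A).mp hA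
  have h1 : A.map ⇑f * A⁻¹.map ⇑f = 1 := by
    rw [← auxMapMul, Matrix.mul_nonsing_inv _ hd]
    simp
  exact (Matrix.inv_eq_right_inv h1).symm

lemma auxCancel (A X Y : Matrix (Fin n) (Fin n) L) (hA : IsUnit A) :
    X * A⁻¹ * (A * Y) = X * Y := by
  have hd : IsUnit A.det := (Matrix.isUnit_iff_isUnit_det A).mp hA
  rw [Matrix.mul_assoc X, ← Matrix.mul_assoc A⁻¹, Matrix.nonsing_inv_mul _ hd, one_mul]

end Aux

theorem statement14 {n q r m : ℕ} (hn : 1 ≤ n) {L : Type*} [Field L] [CharZero L]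
    (F : PhiSigmaDeltaField q r m L) (u v k : Fin r)
    (C Du Dv : Matrix (Fin n) (Fin n) L)
    (hC : IsUnit C) (hDu : IsUnit Du) (hDv : IsUnit Dv)
    (hDuv : Dv.map ⇑(F.σ u) * Du = Du.map ⇑(F.σ v) * Dv) :
    ∀ Z : Matrix (Fin n) (Fin n) L,
      (Dv.map ⇑(F.σ k)).map ⇑(F.σ u) *
          (Du.map ⇑(F.σ k) * Z * C * Du⁻¹ * (C.map ⇑(F.σ u))⁻¹) *
          (C * Dv⁻¹ * (C.map ⇑(F.σ v))⁻¹).map ⇑(F.σ u) =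
        (Du.map ⇑(F.σ k)).map ⇑(F.σ v) *
          (Dv.map ⇑(F.σ k) * Z * C * Dv⁻¹ * (C.map ⇑(F.σ v))⁻¹) *
          (C * Du⁻¹ * (C.map ⇑(F.σ u))⁻¹).map ⇑(F.σ v) := by
  intro Z
  -- commuting of maps
  have hmap : ∀ (i j : Fin r) (A : Matrix (Fin n) (Fin n) L),
      (A.map ⇑(F.σ i)).map ⇑(F.σ j) = (A.map ⇑(F.σ j)).map ⇑(F.σ i) := by
    intro i j A
    ext a b
    simp [Matrix.map_apply, F.comm_σσ]
  have hCu := auxMapIsUnit (F.σ u) C hC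
  have hCv := auxMapIsUnit (F.σ v) C hC
  have hDvu := auxMapIsUnit (F.σ u) Dv hDv
  have hDuv' := auxMapIsUnit (F.σ v) Du hDu
  -- normalize maps of products/inverses
  have expandL : (C * Dv⁻¹ * (C.map ⇑(F.σ v))⁻¹).map ⇑(F.σ u)
      = C.map ⇑(F.σ u) * ((Dv.map ⇑(F.σ u))⁻¹ * ((C.map ⇑(F.σ v)).map ⇑(F.σ u))⁻¹) := by
    rw [auxMapMul, auxMapMul, auxMapInv _ _ hDv, auxMapInv _ _ hCv, Matrix.mul_assoc]
  have expandR : (C * Du⁻¹ * (C.map ⇑(F.σ u))⁻¹).map ⇑(F.σ v)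
      = C.map ⇑(F.σ v) * ((Du.map ⇑(F.σ v))⁻¹ * ((C.map ⇑(F.σ u)).map ⇑(F.σ v))⁻¹) := by
    rw [auxMapMul, auxMapMul, auxMapInv _ _ hDu, auxMapInv _ _ hCu, Matrix.mul_assoc]
  rw [expandL, expandR]
  simp only [← Matrix.mul_assoc]
  rw [Matrix.nonsing_inv_mul_cancel_right _ _ ((Matrix.isUnit_iff_isUnit_det _).mp hCu),
    Matrix.nonsing_inv_mul_cancel_right _ _ ((Matrix.isUnit_iff_isUnit_det _).mp hCv)]
  -- now both sides are products of the form P * (Q * Z * C * D⁻¹) * (E⁻¹ * G⁻¹)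
  have keyL : (Dv.map ⇑(F.σ k)).map ⇑(F.σ u) * (Du.map ⇑(F.σ k))
      = ((Dv.map ⇑(F.σ u)) * Du).map ⇑(F.σ k) := by
    rw [auxMapMul, hmap]
  have keyR : (Du.map ⇑(F.σ k)).map ⇑(F.σ v) * (Dv.map ⇑(F.σ k))
      = ((Du.map ⇑(F.σ v)) * Dv).map ⇑(F.σ k) := by
    rw [auxMapMul, hmap]
  have invL : Du⁻¹ * (Dv.map ⇑(F.σ u))⁻¹ = ((Dv.map ⇑(F.σ u)) * Du)⁻¹ := by
    rw [Matrix.mul_inv_rev]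
  have invR : Dv⁻¹ * (Du.map ⇑(F.σ v))⁻¹ = ((Du.map ⇑(F.σ v)) * Dv)⁻¹ := by
    rw [Matrix.mul_inv_rev]
  calc (Dv.map ⇑(F.σ k)).map ⇑(F.σ u) * (Du.map ⇑(F.σ k)) * Z * C * Du⁻¹ *
        (Dv.map ⇑(F.σ u))⁻¹ * ((C.map ⇑(F.σ v)).map ⇑(F.σ u))⁻¹
      = ((Dv.map ⇑(F.σ u)) * Du).map ⇑(F.σ k) * Z * C *
          ((Dv.map ⇑(F.σ u)) * Du)⁻¹ * ((C.map ⇑(F.σ v)).map ⇑(F.σ u))⁻¹ := by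
        rw [← keyL, ← invL]; noncomm_ring
    _ = ((Du.map ⇑(F.σ v)) * Dv).map ⇑(F.σ k) * Z * C *
          ((Du.map ⇑(F.σ v)) * Dv)⁻¹ * ((C.map ⇑(F.σ u)).map ⇑(F.σ v))⁻¹ := by
        rw [hDuv, hmap]
    _ = (Du.map ⇑(F.σ k)).map ⇑(F.σ v) * (Dv.map ⇑(F.σ k)) * Z * C * Dv⁻¹ *
        (Du.map ⇑(F.σ v))⁻¹ * ((C.map ⇑(F.σ u)).map ⇑(F.σ v))⁻¹ := by
        rw [← keyR, ← invR]; noncomm_ring
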